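/- For all a, c ∈ SH(n): the element b := a⁻¹·(a·c²·a)^{1/2}·a⁻¹ is the unique element of SH(n) with m(a,b) = c, and the element b' := (a⁻¹·c²·a⁻¹)^{1/2} is the unique element of SH(n) with m(b',a) = c. Hence for each a ∈ SH(n) the left and right translations by a for the operation m are bijections of SH(n). -/

import Mathlib

open Matrix ComplexOrder

/-- The set of `n × n` positive-definite Hermitian complex matrices of
determinant `1` (`Matrix.PosDef` includes Hermitian-ness). -/
def SH (n : ℕ) : Set (Matrix (Fin n) (Fin n) ℂ) :=
  {a | a.PosDef ∧ a.det = 1}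

/-- The unique positive-semidefinite square root of a positive-semidefinite
matrix (junk value `0` otherwise). -/
noncomputable def msqrt {n : ℕ} (p : Matrix (Fin n) (Fin n) ℂ) :
    Matrix (Fin n) (Fin n) ℂ :=
  letI := Classical.dec p.PosSemidef
  if h : p.PosSemidef then
    (h.1.eigenvectorUnitary : Matrix (Fin n) (Fin n) ℂ) *
      diagonal ((↑) ∘ (fun x : ℝ => Real.sqrt x) ∘ h.1.eigenvalues) *
      (star h.1.eigenvectorUnitary : Matrix (Fin n) (Fin n) ℂ)
  else 0

/-- The loop multiplication `m(a,b) := (b·a²·b)^{1/2}` on `SH n`. -/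
noncomputable def mSH {n : ℕ} (a b : Matrix (Fin n) (Fin n) ℂ) :
    Matrix (Fin n) (Fin n) ℂ :=
  msqrt (b * a ^ 2 * b)

namespace Matrix.PosSemidef

open scoped MatrixOrder

noncomputable def sqrt {n : ℕ} {A : Matrix (Fin n) (Fin n) ℂ} (_h : A.PosSemidef) :
    Matrix (Fin n) (Fin n) ℂ := CFC.sqrt A

lemma posSemidef_sqrt {n : ℕ} {A : Matrix (Fin n) (Fin n) ℂ} (h : A.PosSemidef) :
    h.sqrt.PosSemidef := (CFC.sqrt_nonneg A).posSemidef

lemma sqrt_mul_self {n : ℕ} {A : Matrix (Fin n) (Fin n) ℂ} (h : A.PosSemidef) :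
    h.sqrt * h.sqrt = A := CFC.sqrt_mul_sqrt_self A h.nonneg

lemma sq_sqrt {n : ℕ} {A : Matrix (Fin n) (Fin n) ℂ} (h : A.PosSemidef) :
    h.sqrt ^ 2 = A := CFC.sq_sqrt A h.nonneg

lemma sqrt_sq {n : ℕ} {A : Matrix (Fin n) (Fin n) ℂ} (h : A.PosSemidef) :
    (h.pow 2).sqrt = A := CFC.sqrt_sq A h.nonneg

lemma eq_sqrt_of_sq_eq {n : ℕ} {A B : Matrix (Fin n) (Fin n) ℂ} (hB : B.PosSemidef)
    (hA : A.PosSemidef) (h : B ^ 2 = A) : B = hA.sqrt :=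
  (CFC.sqrt_unique (by rw [← sq]; exact h) hB.nonneg).symm

end Matrix.PosSemidef

open scoped MatrixOrder in
lemma msqrt_eq {n : ℕ} {p : Matrix (Fin n) (Fin n) ℂ} (hp : p.PosSemidef) :
    msqrt p = hp.sqrt := by
  rw [msqrt, dif_pos hp, PosSemidef.sqrt, CFC.sqrt_eq_cfc, cfc_nnreal_eq_real _ p, hp.1.cfc_eq]
  simp only [IsHermitian.cfc, Unitary.conjStarAlgAut_apply]
  congr 3
  funext i
  simp [max_eq_left (hp.eigenvalues_nonneg i)]

lemma posDef_of_det {n : ℕ} {M : Matrix (Fin n) (Fin n) ℂ}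
    (hM : M.PosSemidef) (h : M.det ≠ 0) : M.PosDef := by
  exact hM.posDef_iff_det_ne_zero.mpr h

lemma posDef_conj {n : ℕ} {A B : Matrix (Fin n) (Fin n) ℂ}
    (hA : A.PosDef) (hB : IsUnit B.det) (hBh : Bᴴ = B) : (B * A * B).PosDef := by
  have := hA.posSemidef.conjTranspose_mul_mul_same B
  rw [hBh] at this
  refine posDef_of_det this ?_
  simp only [det_mul]
  exact mul_ne_zero (mul_ne_zero hB.ne_zero hA.det_pos.ne') hB.ne_zero

lemma det_sqrt_one {n : ℕ} {P : Matrix (Fin n) (Fin n) ℂ}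
    (hP : P.PosSemidef) (h : P.det = 1) : hP.sqrt.det = 1 := by
  have h2 : hP.sqrt.det ^ 2 = 1 := by rw [← det_pow, hP.sq_sqrt, h]
  have hne : hP.sqrt.det ≠ 0 := fun h0 => by simp [h0] at h2
  have hpos : (0 : ℂ) < hP.sqrt.det := (posDef_of_det hP.posSemidef_sqrt hne).det_pos
  have hfac : (hP.sqrt.det - 1) * (hP.sqrt.det + 1) = 0 := by linear_combination h2
  rcases mul_eq_zero.mp hfac with h1 | h1
  · exact sub_eq_zero.mp h1
  · exfalso
    have hneg : hP.sqrt.det = -1 := eq_neg_of_add_eq_zero_left h1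
    rw [hneg] at hpos
    exact absurd hpos (by norm_num)

lemma sqrt_posDef {n : ℕ} {P : Matrix (Fin n) (Fin n) ℂ}
    (hP : P.PosSemidef) (h : P.det = 1) : hP.sqrt.PosDef :=
  posDef_of_det hP.posSemidef_sqrt (by rw [det_sqrt_one hP h]; norm_num)

/-- For all `a c ∈ SH n`, `b := a⁻¹·(a·c²·a)^{1/2}·a⁻¹` is the
unique element of `SH n` with `m(a,b) = c`, and `b' := (a⁻¹·c²·a⁻¹)^{1/2}` is the
unique element of `SH n` with `m(b',a) = c`; hence the left and right
translations by `a` for `m` are bijections of `SH n`. -/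
theorem stmt_13 (n : ℕ) (a c : Matrix (Fin n) (Fin n) ℂ)
    (ha : a ∈ SH n) (hc : c ∈ SH n) :
    (a⁻¹ * msqrt (a * c ^ 2 * a) * a⁻¹ ∈ SH n ∧
      mSH a (a⁻¹ * msqrt (a * c ^ 2 * a) * a⁻¹) = c ∧
      ∀ b ∈ SH n, mSH a b = c → b = a⁻¹ * msqrt (a * c ^ 2 * a) * a⁻¹) ∧
    (msqrt (a⁻¹ * c ^ 2 * a⁻¹) ∈ SH n ∧
      mSH (msqrt (a⁻¹ * c ^ 2 * a⁻¹)) a = c ∧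
      ∀ b' ∈ SH n, mSH b' a = c → b' = msqrt (a⁻¹ * c ^ 2 * a⁻¹)) := by
  obtain ⟨haP, haD⟩ := ha
  obtain ⟨hcP, hcD⟩ := hc
  have haU : IsUnit a.det := by rw [haD]; exact isUnit_one
  have aH : aᴴ = a := haP.1
  have aiH : (a⁻¹)ᴴ = a⁻¹ := haP.1.inv
  have haiD : (a⁻¹).det = 1 := by
    rw [det_nonsing_inv, haD]; simp
  have haiU : IsUnit (a⁻¹).det := by rw [haiD]; exact isUnit_one
  -- c² is positive definite with det 1
  have hc2P : (c ^ 2).PosDef := by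
    refine posDef_of_det (hcP.posSemidef.pow 2) ?_
    rw [det_pow, hcD]; norm_num
  have hc2D : (c ^ 2).det = 1 := by rw [det_pow, hcD, one_pow]
  have hC2 : msqrt (c ^ 2) = c := by
    rw [msqrt_eq (hcP.posSemidef.pow 2)]
    exact hcP.posSemidef.sqrt_sq
  constructor
  · -- left translation
    have hpP : (a * c ^ 2 * a).PosDef := posDef_conj hc2P haU aH
    have hpD : (a * c ^ 2 * a).det = 1 := by
      simp [det_mul, haD, hc2D]
    have hpsd : (a * c ^ 2 * a).PosSemidef := hpP.posSemidef
    set s := hpsd.sqrt with hs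
    have hms : msqrt (a * c ^ 2 * a) = s := msqrt_eq hpsd
    have hsP : s.PosDef := sqrt_posDef hpsd hpD
    have hsD : s.det = 1 := det_sqrt_one hpsd hpD
    have hss : s * s = a * c ^ 2 * a := hpsd.sqrt_mul_self
    rw [hms]
    have hE : a⁻¹ * s * a⁻¹ * a ^ 2 * (a⁻¹ * s * a⁻¹) = c ^ 2 := by
      rw [pow_two]
      simp only [Matrix.mul_assoc]
      rw [Matrix.nonsing_inv_mul_cancel_left _ _ haU,
        Matrix.mul_nonsing_inv_cancel_left _ _ haU, ← Matrix.mul_assoc s s, hss,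
        Matrix.mul_nonsing_inv_cancel_right _ _ haU,
        Matrix.nonsing_inv_mul_cancel_left _ _ haU]
    refine ⟨⟨posDef_conj hsP haiU aiH, by simp [det_mul, haiD, hsD]⟩, ?_, ?_⟩
    · rw [mSH, hE, hC2]
    · intro b hb hm
      have hbH : bᴴ = b := hb.1.1
      have hbpsd : (b * a ^ 2 * b).PosSemidef := by
        have := (haP.posSemidef.pow 2).conjTranspose_mul_mul_same b
        rwa [hbH] at this
      rw [mSH, msqrt_eq hbpsd] at hm
      have hbc : b * a ^ 2 * b = c ^ 2 := by
        rw [← hm]; exact hbpsd.sq_sqrt.symm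
      have habP : (a * b * a).PosDef := posDef_conj hb.1 haU aH
      have hsq : (a * b * a) ^ 2 = a * c ^ 2 * a := by
        rw [pow_two, ← hbc]
        simp only [pow_two, Matrix.mul_assoc]
      have : a * b * a = s := habP.posSemidef.eq_sqrt_of_sq_eq hpsd hsq
      calc b = a⁻¹ * (a * b * a) * a⁻¹ := by
              rw [Matrix.mul_assoc (a⁻¹) _ _]
              rw [Matrix.mul_nonsing_inv_cancel_right _ _ haU,
                Matrix.nonsing_inv_mul_cancel_left _ _ haU]
        _ = a⁻¹ * s * a⁻¹ := by rw [this]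
  · -- right translation
    have hqP : (a⁻¹ * c ^ 2 * a⁻¹).PosDef := posDef_conj hc2P haiU aiH
    have hqD : (a⁻¹ * c ^ 2 * a⁻¹).det = 1 := by simp [det_mul, haiD, hc2D]
    have hqsd : (a⁻¹ * c ^ 2 * a⁻¹).PosSemidef := hqP.posSemidef
    have hms : msqrt (a⁻¹ * c ^ 2 * a⁻¹) = hqsd.sqrt := msqrt_eq hqsd
    rw [hms]
    have hsP : hqsd.sqrt.PosDef := sqrt_posDef hqsd hqD
    have hsD : hqsd.sqrt.det = 1 := det_sqrt_one hqsd hqD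
    refine ⟨⟨hsP, hsD⟩, ?_, ?_⟩
    · rw [mSH, hqsd.sq_sqrt]
      simp only [Matrix.mul_assoc]
      rw [Matrix.mul_nonsing_inv_cancel_left _ _ haU,
        Matrix.nonsing_inv_mul a haU, Matrix.mul_one, hC2]
    · intro b' hb' hm
      have hbpsd : (a * b' ^ 2 * a).PosSemidef := by
        have := (hb'.1.posSemidef.pow 2).conjTranspose_mul_mul_same a
        rwa [aH] at this
      rw [mSH, msqrt_eq hbpsd] at hm
      have hbc : a * b' ^ 2 * a = c ^ 2 := by
        rw [← hm]; exact hbpsd.sq_sqrt.symm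
      have hb2 : b' ^ 2 = a⁻¹ * c ^ 2 * a⁻¹ := by
        rw [← hbc]
        simp only [Matrix.mul_assoc]
        rw [Matrix.nonsing_inv_mul_cancel_left _ _ haU,
          Matrix.mul_nonsing_inv a haU, Matrix.mul_one]
      exact hb'.1.posSemidef.eq_sqrt_of_sq_eq hqsd hb2
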